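/- arXiv:1911.05859 — 3 statements merged into one kernel-verified Lean document; each statement's English description precedes it below -/
import Mathlib

section
/- Let a, γ, b̃, σ²_w, τ_c, τ_f ∈ ℝ with γ > 0, b̃ > 0, σ²_w > 0. The equation obtained from setting the derivative of the steady-state variance to zero with exponential noise model R(τ) = b̃e^{−γτ} and constant delays has the unique solution τ_opt = (1/γ)[ln(γ²/4 − a²) + ln(b̃/σ²_w)], and τ_opt > 0 if and only if γ > 2√(σ²_w/b̃ + a²). -/
open Real

theorem stmt7 (a γ btil σw : ℝ) (hγ : 0 < γ) (hb : 0 < btil) (hσ : 0 < σw)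
    (hpos : a ^ 2 < γ ^ 2 / 4) :
    let τopt : ℝ := (1 / γ) * (Real.log (γ ^ 2 / 4 - a ^ 2) + Real.log (btil / σw))
    ((σw / btil) * Real.exp (γ * τopt) = γ ^ 2 / 4 - a ^ 2 ∧
      ∀ τ : ℝ, (σw / btil) * Real.exp (γ * τ) = γ ^ 2 / 4 - a ^ 2 → τ = τopt) ∧
    (0 < τopt ↔ γ > 2 * Real.sqrt (σw / btil + a ^ 2)) := by
  intro τopt
  have hD : 0 < γ ^ 2 / 4 - a ^ 2 := by linarith
  have hbσ : 0 < btil / σw := div_pos hb hσ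
  have hγτ : γ * τopt = Real.log ((γ ^ 2 / 4 - a ^ 2) * (btil / σw)) := by
    rw [Real.log_mul (ne_of_gt hD) (ne_of_gt hbσ)]
    show γ * ((1 / γ) * (Real.log (γ ^ 2 / 4 - a ^ 2) + Real.log (btil / σw))) = _
    rw [← mul_assoc, mul_one_div_cancel (ne_of_gt hγ), one_mul]
  have hmain : (σw / btil) * Real.exp (γ * τopt) = γ ^ 2 / 4 - a ^ 2 := by
    rw [hγτ, Real.exp_log (by positivity)]
    field_simp
  refine ⟨⟨hmain, ?_⟩, ?_⟩
  · intro τ hτ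
    have hσb : (0:ℝ) < σw / btil := div_pos hσ hb
    have h2 : Real.exp (γ * τ) = Real.exp (γ * τopt) :=
      mul_left_cancel₀ (ne_of_gt hσb) (hτ.trans hmain.symm)
    exact mul_left_cancel₀ (ne_of_gt hγ) (Real.exp_injective h2)
  · have hiff : (1 < (γ ^ 2 / 4 - a ^ 2) * (btil / σw)) ↔ σw / btil < γ ^ 2 / 4 - a ^ 2 := by
      rw [div_lt_iff₀ hb, show (γ ^ 2 / 4 - a ^ 2) * (btil / σw)
        = (γ ^ 2 / 4 - a ^ 2) * btil / σw by ring, lt_div_iff₀ hσ, one_mul]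
    have key : 0 < τopt ↔ σw / btil + a ^ 2 < (γ / 2) ^ 2 := by
      constructor
      · intro h
        have h1 : 0 < γ * τopt := mul_pos hγ h
        rw [hγτ] at h1
        have h2 : 1 < (γ ^ 2 / 4 - a ^ 2) * (btil / σw) := by
          by_contra hc
          push_neg at hc
          have := Real.log_nonpos (by positivity) hc
          linarith
        have h3 := hiff.mp h2
        nlinarith
      · intro h
        have h3 : σw / btil < γ ^ 2 / 4 - a ^ 2 := by nlinarith
        have h1 : 0 < γ * τopt := by
          rw [hγτ]; exact Real.log_pos (hiff.mpr h3)
        nlinarith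
    rw [key]
    have hγ2 : 0 < γ / 2 := by linarith
    constructor
    · intro h
      have := (Real.sqrt_lt' hγ2).mpr h
      calc 2 * Real.sqrt (σw / btil + a ^ 2) < 2 * (γ / 2) := by linarith
        _ = γ := by ring
    · intro h
      have : Real.sqrt (σw / btil + a ^ 2) < γ / 2 := by linarith
      exact (Real.sqrt_lt' hγ2).mp this
end

section
/- Let a < 0, σ²_w > 0, b̃ > 0, c ≥ 0, f ≥ 0, and fix τ > 0. Define g : ℕ_{≥1} → ℝ by g(N) = e^{2a(τ + c + fN)} p∞(τ, N) − (σ²_w/(2a))(1 − e^{2a(τ + c + fN)}), where p∞(τ, N) = (b/(Nc₀²τ))(a + √(a² + (Nc₀²σ²_w τ)/b)) for constants b, c₀ > 0. If f = 0 then g is nonincreasing in N; if f > 0 then g(N) → σ²_w/(2|a|) as N → ∞. -/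
open Real Filter Topology

theorem stmt10 (a σw b c0 c f τ : ℝ) (ha : a < 0) (hσ : 0 < σw) (hb : 0 < b)
    (hc0 : 0 < c0) (hc : 0 ≤ c) (hf : 0 ≤ f) (hτ : 0 < τ) :
    let pinf : ℕ → ℝ := fun N =>
      (b / (N * c0 ^ 2 * τ)) * (a + Real.sqrt (a ^ 2 + (N * c0 ^ 2 * σw * τ) / b))
    let g : ℕ → ℝ := fun N =>
      Real.exp (2 * a * (τ + c + f * N)) * pinf N -
        (σw / (2 * a)) * (1 - Real.exp (2 * a * (τ + c + f * N)))
    (f = 0 → ∀ M N : ℕ, 1 ≤ M → M ≤ N → g N ≤ g M) ∧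
    (0 < f → Tendsto g atTop (𝓝 (σw / (2 * |a|)))) := by
  intro pinf g
  have key : ∀ N : ℕ, 1 ≤ N →
      pinf N = σw / (Real.sqrt (a ^ 2 + (N * c0 ^ 2 * σw * τ) / b) - a) := by
    intro N hN
    have hN' : (0:ℝ) < N := by exact_mod_cast hN
    have ht : 0 < ((N:ℝ) * c0 ^ 2 * σw * τ) / b := by positivity
    set t := ((N:ℝ) * c0 ^ 2 * σw * τ) / b with hts
    have hr2 : Real.sqrt (a ^ 2 + t) ^ 2 = a ^ 2 + t :=
      Real.sq_sqrt (by positivity)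
    have hra : a < Real.sqrt (a ^ 2 + t) :=
      lt_of_lt_of_le ha (Real.sqrt_nonneg _)
    have hden : Real.sqrt (a ^ 2 + t) - a > 0 := by linarith
    have h1 : (a + Real.sqrt (a ^ 2 + t)) * (Real.sqrt (a ^ 2 + t) - a) = t := by
      nlinarith [hr2]
    show (b / ((N:ℝ) * c0 ^ 2 * τ)) * (a + Real.sqrt (a ^ 2 + t)) = _
    rw [eq_div_iff (ne_of_gt hden)]
    have hb' : b ≠ 0 := ne_of_gt hb
    have : (b / ((N:ℝ) * c0 ^ 2 * τ)) * t = σw := by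
      rw [hts]; field_simp
    calc (b / ((N:ℝ) * c0 ^ 2 * τ)) * (a + Real.sqrt (a ^ 2 + t)) *
          (Real.sqrt (a ^ 2 + t) - a)
        = (b / ((N:ℝ) * c0 ^ 2 * τ)) * t := by rw [mul_assoc, h1]
      _ = σw := this
  constructor
  · intro hf0 M N hM hMN
    have hN : 1 ≤ N := le_trans hM hMN
    have hMN' : (M:ℝ) ≤ N := by exact_mod_cast hMN
    have hM' : (0:ℝ) < M := by exact_mod_cast hM
    have hsq : Real.sqrt (a ^ 2 + ((M:ℝ) * c0 ^ 2 * σw * τ) / b) ≤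
        Real.sqrt (a ^ 2 + ((N:ℝ) * c0 ^ 2 * σw * τ) / b) := by
      apply Real.sqrt_le_sqrt
      gcongr
    have hdenM : 0 < Real.sqrt (a ^ 2 + ((M:ℝ) * c0 ^ 2 * σw * τ) / b) - a := by
      have := Real.sqrt_nonneg (a ^ 2 + ((M:ℝ) * c0 ^ 2 * σw * τ) / b); linarith
    have hp : pinf N ≤ pinf M := by
      rw [key M hM, key N hN]
      apply div_le_div_of_nonneg_left hσ.le hdenM
      linarith
    have hE : 0 < Real.exp (2 * a * (τ + c + f * (N:ℝ))) := Real.exp_pos _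
    simp only [g, hf0, zero_mul, add_zero]
    have hEpos : 0 < Real.exp (2 * a * (τ + c)) := Real.exp_pos _
    nlinarith [hEpos]
  · intro hfpos
    have hE : Tendsto (fun N : ℕ => Real.exp (2 * a * (τ + c + f * N))) atTop (𝓝 0) := by
      have heq : ∀ N : ℕ, Real.exp (2 * a * (τ + c + f * N)) =
          Real.exp (2 * a * (τ + c)) * Real.exp (2 * a * f) ^ N := by
        intro N
        rw [← Real.exp_nat_mul, ← Real.exp_add]
        ring_nf
      simp only [heq]
      have hr1 : Real.exp (2 * a * f) < 1 := by
        rw [Real.exp_lt_one_iff]; nlinarith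
      have hr0 : (0:ℝ) ≤ Real.exp (2 * a * f) := (Real.exp_pos _).le
      have := (tendsto_pow_atTop_nhds_zero_of_lt_one hr0 hr1).const_mul
        (Real.exp (2 * a * (τ + c)))
      simpa using this
    have hP : Tendsto pinf atTop (𝓝 0) := by
      have hInner : Tendsto (fun N : ℕ =>
          Real.sqrt (a ^ 2 + ((N:ℝ) * c0 ^ 2 * σw * τ) / b) - a) atTop atTop := by
        apply tendsto_atTop_add_const_right
        have hsqrtT : Tendsto Real.sqrt atTop atTop :=
          tendsto_atTop_atTop.mpr fun r => ⟨r ^ 2, fun x hx => Real.le_sqrt_of_sq_le hx⟩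
        apply hsqrtT.comp
        apply tendsto_atTop_add_const_left
        have h1 : Tendsto (fun N : ℕ => ((N:ℝ) * c0 ^ 2 * σw * τ) / b) atTop atTop := by
          have : ∀ N : ℕ, ((N:ℝ) * c0 ^ 2 * σw * τ) / b = (c0 ^ 2 * σw * τ / b) * N := by
            intro N; ring
          simp only [this]
          exact (tendsto_natCast_atTop_atTop).const_mul_atTop (by positivity)
        exact h1
      have h2 : Tendsto (fun N : ℕ =>
          σw / (Real.sqrt (a ^ 2 + ((N:ℝ) * c0 ^ 2 * σw * τ) / b) - a)) atTop (𝓝 0) :=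
        Tendsto.div_atTop tendsto_const_nhds hInner
      apply h2.congr'
      filter_upwards [eventually_ge_atTop 1] with N hN
      exact (key N hN).symm
    have hg : Tendsto g atTop (𝓝 (0 * 0 - (σw / (2 * a)) * (1 - 0))) := by
      exact (hE.mul hP).sub ((tendsto_const_nhds.sub hE).const_mul (σw / (2 * a)))
    convert hg using 2
    rw [abs_of_neg ha]
    field_simp
    ring
end

section
/- Fix real a, and let b̃, σ²_w > 0 with constant total extra delay d = c + fN ≥ 0. Define p(τ) = e^{2a(τ+d)} p∞(τ) + q(τ+d) on (0,∞), with p∞(τ) = (b̃/τ)(a + √(a² + (σ²_w/b̃)τ)) and q(T) = (σ²_w/(2a))(e^{2aT}−1) for a ≠ 0, q(T) = σ²_w T for a = 0. Then p is differentiable on (0,∞), and every critical point τ of p satisfies (σ²_w/b̃)τ³ + a²τ² = 1/4. -/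
open Set Real

lemma aux_deriv (a σw btil d : ℝ) (hσ : 0 < σw) (hb : 0 < btil) (τ : ℝ) (hτ : 0 < τ) :
    HasDerivAt (fun x : ℝ => Real.exp (2 * a * (x + d)) *
        ((btil / x) * (a + Real.sqrt (a ^ 2 + (σw / btil) * x))) +
        (if a = 0 then σw * (x + d) else (σw / (2 * a)) * (Real.exp (2 * a * (x + d)) - 1)))
      (Real.exp (2 * a * (τ + d)) * (2 * a) *
          ((btil / τ) * (a + Real.sqrt (a ^ 2 + (σw / btil) * τ))) +
        Real.exp (2 * a * (τ + d)) *
          (btil * -(τ ^ 2)⁻¹ * (a + Real.sqrt (a ^ 2 + (σw / btil) * τ)) +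
            (btil / τ) * (1 / (2 * Real.sqrt (a ^ 2 + (σw / btil) * τ)) * (σw / btil))) +
        σw * Real.exp (2 * a * (τ + d))) τ := by
  have harg : 0 < a ^ 2 + (σw / btil) * τ := by positivity
  have hlin : HasDerivAt (fun x : ℝ => 2 * a * (x + d)) (2 * a) τ := by
    simpa using ((hasDerivAt_id τ).add_const d).const_mul (2 * a)
  have hexp : HasDerivAt (fun x : ℝ => Real.exp (2 * a * (x + d)))
      (Real.exp (2 * a * (τ + d)) * (2 * a)) τ :=
    (Real.hasDerivAt_exp _).comp τ hlin
  have hin : HasDerivAt (fun x : ℝ => a ^ 2 + (σw / btil) * x) (σw / btil) τ := by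
    simpa using ((hasDerivAt_id τ).const_mul (σw / btil)).const_add (a ^ 2)
  have hsq : HasDerivAt (fun x : ℝ => Real.sqrt (a ^ 2 + (σw / btil) * x))
      (1 / (2 * Real.sqrt (a ^ 2 + (σw / btil) * τ)) * (σw / btil)) τ :=
    (Real.hasDerivAt_sqrt harg.ne').comp τ hin
  have hinv : HasDerivAt (fun x : ℝ => btil / x) (btil * -(τ ^ 2)⁻¹) τ := by
    simpa [div_eq_mul_inv] using (hasDerivAt_inv hτ.ne').const_mul btil
  have hpinf : HasDerivAt (fun x : ℝ => (btil / x) * (a + Real.sqrt (a ^ 2 + (σw / btil) * x)))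
      (btil * -(τ ^ 2)⁻¹ * (a + Real.sqrt (a ^ 2 + (σw / btil) * τ)) +
        (btil / τ) * (1 / (2 * Real.sqrt (a ^ 2 + (σw / btil) * τ)) * (σw / btil))) τ :=
    hinv.mul (hsq.const_add a)
  have hq : HasDerivAt (fun x : ℝ =>
      if a = 0 then σw * (x + d) else (σw / (2 * a)) * (Real.exp (2 * a * (x + d)) - 1))
      (σw * Real.exp (2 * a * (τ + d))) τ := by
    by_cases ha : a = 0
    · simp only [ha, if_true]
      simpa [ha] using ((hasDerivAt_id τ).add_const d).const_mul σw
    · simp only [ha, if_false]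
      have := (hexp.sub_const 1).const_mul (σw / (2 * a))
      refine this.congr_deriv ?_
      field_simp [ha]
  exact ((hexp.mul hpinf).add hq)

theorem stmt17 (a σw btil d : ℝ) (hσ : 0 < σw) (hb : 0 < btil) (hd : 0 ≤ d) :
    let pinf : ℝ → ℝ := fun τ => (btil / τ) * (a + Real.sqrt (a ^ 2 + (σw / btil) * τ))
    let q : ℝ → ℝ := fun T =>
      if a = 0 then σw * T else (σw / (2 * a)) * (Real.exp (2 * a * T) - 1)
    let p : ℝ → ℝ := fun τ => Real.exp (2 * a * (τ + d)) * pinf τ + q (τ + d)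
    (∀ τ ∈ Ioi (0 : ℝ), DifferentiableAt ℝ p τ) ∧
    (∀ τ ∈ Ioi (0 : ℝ), deriv p τ = 0 →
      (σw / btil) * τ ^ 3 + a ^ 2 * τ ^ 2 = 1 / 4) := by
  intro pinf q p
  have hp : ∀ τ : ℝ, 0 < τ → HasDerivAt p
      (Real.exp (2 * a * (τ + d)) * (2 * a) *
          ((btil / τ) * (a + Real.sqrt (a ^ 2 + (σw / btil) * τ))) +
        Real.exp (2 * a * (τ + d)) *
          (btil * -(τ ^ 2)⁻¹ * (a + Real.sqrt (a ^ 2 + (σw / btil) * τ)) +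
            (btil / τ) * (1 / (2 * Real.sqrt (a ^ 2 + (σw / btil) * τ)) * (σw / btil))) +
        σw * Real.exp (2 * a * (τ + d))) τ := by
    intro τ hτ
    exact aux_deriv a σw btil d hσ hb τ hτ
  constructor
  · intro τ hτ
    exact (hp τ hτ).differentiableAt
  · intro τ hτ hderiv
    have hτ0 : (0:ℝ) < τ := hτ
    set s := Real.sqrt (a ^ 2 + (σw / btil) * τ) with hsdef
    have harg : 0 < a ^ 2 + (σw / btil) * τ := by positivity
    have hs2 : s ^ 2 = a ^ 2 + (σw / btil) * τ := Real.sq_sqrt harg.le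
    have hspos : 0 < s := Real.sqrt_pos.mpr harg
    have hD := (hp τ hτ0).deriv
    rw [hderiv] at hD
    -- hD : 0 = D; extract bracket = 0
    have hexp0 : Real.exp (2 * a * (τ + d)) ≠ 0 := Real.exp_ne_zero _
    have hE : 2 * a * ((btil / τ) * (a + s)) +
        (btil * -(τ ^ 2)⁻¹ * (a + s) + (btil / τ) * (1 / (2 * s) * (σw / btil))) + σw = 0 := by
      have h : Real.exp (2 * a * (τ + d)) * (2 * a * ((btil / τ) * (a + s)) +
          (btil * -(τ ^ 2)⁻¹ * (a + s) + (btil / τ) * (1 / (2 * s) * (σw / btil))) + σw) = 0 := by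
        linear_combination -hD
      exact (mul_eq_zero.mp h).resolve_left hexp0
    field_simp at hE
    have hP2 : btil * s ^ 2 = btil * a ^ 2 + σw * τ := by
      rw [hs2]; field_simp
    have hστ : σw * τ = btil * (s ^ 2 - a ^ 2) := by linear_combination (-1 : ℝ) * hP2
    have hF : btil * τ * (a + s) ^ 2 * (2 * τ * s - 1) = 0 := by
      linear_combination τ * hE - (τ + 2 * τ ^ 2 * s) * hστ
    have hkey : (4 * τ ^ 2 * s ^ 2 - 1) * (τ ^ 2 * (σw * τ) ^ 2) = 0 := by
      linear_combination (btil * τ * (s - a) ^ 2 * (2 * τ * s + 1)) * hF +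
        (4 * τ ^ 2 * s ^ 2 - 1) * τ ^ 2 * (σw * τ + btil * (s ^ 2 - a ^ 2)) * hστ
    have h4 : 4 * τ ^ 2 * s ^ 2 = 1 := by
      rcases mul_eq_zero.mp hkey with h | h
      · linarith
      · exfalso
        have : (0:ℝ) < τ ^ 2 * (σw * τ) ^ 2 := by positivity
        linarith
    linear_combination (1 / 4) * h4 - τ ^ 2 * hs2
end
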